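/- Let W_1, ..., W_K be independent uniform random variables, S a random variable independent of (W_1,...,W_K, Q), and A a random variable that is a deterministic function of (Q, W_{[1:K]}, S). If I(W_{\bar k}; A, Q) = 0 and H(W_k | A, Q) ≤ δ, then H(A | Q) ≤ H(S) + H(W_k) + δ, where W_{\bar k} denotes all messages except W_k. -/
import Mathlib


open Finset

/-- Probability that a finite random variable `X` (on a finite outcome space with
probability mass function `p`) takes the value `a`. -/
noncomputable def probOf {Ω : Type*} [Fintype Ω] {α : Type*} [Fintype α] [DecidableEq α]
    (p : Ω → ℝ) (X : Ω → α) (a : α) : ℝ :=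
  ∑ ω ∈ univ.filter (fun ω => X ω = a), p ω

/-- Shannon entropy `H(X)` of a finite random variable. -/
noncomputable def entH {Ω : Type*} [Fintype Ω] {α : Type*} [Fintype α] [DecidableEq α]
    (p : Ω → ℝ) (X : Ω → α) : ℝ :=
  - ∑ a : α, probOf p X a * Real.log (probOf p X a)

/-- Conditional Shannon entropy `H(X | Y) = H(X, Y) - H(Y)`. -/
noncomputable def condH {Ω : Type*} [Fintype Ω] {α β : Type*}
    [Fintype α] [DecidableEq α] [Fintype β] [DecidableEq β]
    (p : Ω → ℝ) (X : Ω → α) (Y : Ω → β) : ℝ :=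
  entH p (fun ω => (X ω, Y ω)) - entH p Y

/-- Mutual information `I(X ; Y) = H(X) + H(Y) - H(X, Y)`. -/
noncomputable def mutI {Ω : Type*} [Fintype Ω] {α β : Type*}
    [Fintype α] [DecidableEq α] [Fintype β] [DecidableEq β]
    (p : Ω → ℝ) (X : Ω → α) (Y : Ω → β) : ℝ :=
  entH p X + entH p Y - entH p (fun ω => (X ω, Y ω))

/-- Conditional mutual information `I(X ; Y | Z) = H(X|Z) + H(Y|Z) - H(X,Y|Z)`. -/
noncomputable def cmutI {Ω : Type*} [Fintype Ω] {α β γ : Type*}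
    [Fintype α] [DecidableEq α] [Fintype β] [DecidableEq β] [Fintype γ] [DecidableEq γ]
    (p : Ω → ℝ) (X : Ω → α) (Y : Ω → β) (Z : Ω → γ) : ℝ :=
  condH p X Z + condH p Y Z - condH p (fun ω => (X ω, Y ω)) Z

/-- `p` is a probability mass function on the finite outcome space `Ω`. -/
def IsPMF {Ω : Type*} [Fintype Ω] (p : Ω → ℝ) : Prop :=
  (∀ ω, 0 ≤ p ω) ∧ ∑ ω, p ω = 1

section Helpers
set_option linter.unusedSectionVars false
variable {Ω : Type*} [Fintype Ω] {α β : Type*} [Fintype α] [DecidableEq α]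
  [Fintype β] [DecidableEq β]

lemma probOf_nonneg {p : Ω → ℝ} (hp : ∀ ω, 0 ≤ p ω) (X : Ω → α) (a : α) :
    0 ≤ probOf p X a :=
  Finset.sum_nonneg fun _ _ => hp _

lemma sum_probOf (p : Ω → ℝ) (X : Ω → α) : ∑ a, probOf p X a = ∑ ω, p ω :=
  Finset.sum_fiberwise _ _ _

lemma probOf_comp (p : Ω → ℝ) (f : α → β) (X : Ω → α) (b : β) :
    probOf p (fun ω => f (X ω)) b = ∑ a ∈ univ.filter (fun a => f a = b), probOf p X a := by
  unfold probOf
  rw [Finset.sum_fiberwise_eq_sum_filter]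
  apply Finset.sum_congr _ (fun _ _ => rfl)
  ext ω
  simp

lemma probOf_le_comp {p : Ω → ℝ} (hp : ∀ ω, 0 ≤ p ω) (f : α → β) (X : Ω → α) (a : α) :
    probOf p X a ≤ probOf p (fun ω => f (X ω)) (f a) := by
  apply Finset.sum_le_sum_of_subset_of_nonneg
  · intro ω hω
    simp only [mem_filter, mem_univ, true_and] at *
    rw [hω]
  · exact fun ω _ _ => hp ω

lemma entH_comp_le {p : Ω → ℝ} (hp : ∀ ω, 0 ≤ p ω) (f : α → β) (X : Ω → α) :
    entH p (fun ω => f (X ω)) ≤ entH p X := by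
  unfold entH
  rw [neg_le_neg_iff]
  have key : ∑ b : β, probOf p (fun ω => f (X ω)) b * Real.log (probOf p (fun ω => f (X ω)) b)
      = ∑ a : α, probOf p X a * Real.log (probOf p (fun ω => f (X ω)) (f a)) := by
    rw [← Finset.sum_fiberwise univ f
      (fun a => probOf p X a * Real.log (probOf p (fun ω => f (X ω)) (f a)))]
    refine Finset.sum_congr rfl fun b _ => ?_
    rw [probOf_comp, Finset.sum_mul]
    refine Finset.sum_congr rfl fun a ha => ?_
    simp only [mem_filter, mem_univ, true_and] at ha
    rw [← probOf_comp, ha]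
  rw [key]
  refine Finset.sum_le_sum fun a _ => ?_
  rcases eq_or_lt_of_le (probOf_nonneg hp X a) with h | h
  · rw [← h]; ring_nf; exact le_refl _
  · have hle := probOf_le_comp hp f X a
    exact mul_le_mul_of_nonneg_left (Real.log_le_log (by exact h) hle) (le_of_lt h)

lemma entH_comp_inj (p : Ω → ℝ) {f : α → β} (hf : Function.Injective f) (X : Ω → α) :
    entH p (fun ω => f (X ω)) = entH p X := by
  unfold entH
  congr 1
  have h0 : ∀ b ∈ (univ : Finset β), b ∉ univ.image f →
      probOf p (fun ω => f (X ω)) b * Real.log (probOf p (fun ω => f (X ω)) b) = 0 := by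
    intro b _ hb
    have : probOf p (fun ω => f (X ω)) b = 0 := by
      unfold probOf
      apply Finset.sum_eq_zero
      intro ω hω
      simp only [mem_filter, mem_univ, true_and] at hω
      exact absurd (hω ▸ Finset.mem_image_of_mem f (mem_univ (X ω))) hb
    simp [this]
  rw [← Finset.sum_subset (Finset.subset_univ (univ.image f)) h0,
    Finset.sum_image (fun a _ a' _ h => hf h)]
  refine Finset.sum_congr rfl fun a _ => ?_
  have : probOf p (fun ω => f (X ω)) (f a) = probOf p X a := by
    unfold probOf
    apply Finset.sum_congr _ (fun _ _ => rfl)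
    ext ω; simp [hf.eq_iff]
  rw [this]

lemma gibbs {γ : Type*} [Fintype γ] (r q : γ → ℝ) (hr : ∀ a, 0 ≤ r a) (hq : ∀ a, 0 ≤ q a)
    (hrq : ∀ a, 0 < r a → 0 < q a) (hsum : ∑ a, q a ≤ ∑ a, r a) :
    - ∑ a, r a * Real.log (r a) ≤ - ∑ a, r a * Real.log (q a) := by
  rw [neg_le_neg_iff]
  have key : ∀ a, r a * Real.log (q a) - r a * Real.log (r a) ≤ q a - r a := by
    intro a
    rcases eq_or_lt_of_le (hr a) with h | h
    · simp [← h, hq a]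
    · have hqa := hrq a h
      have : Real.log (q a) - Real.log (r a) = Real.log (q a / r a) := (Real.log_div (ne_of_gt hqa) (ne_of_gt h)).symm
      calc r a * Real.log (q a) - r a * Real.log (r a)
          = r a * (Real.log (q a / r a)) := by rw [← this]; ring
        _ ≤ r a * (q a / r a - 1) := by
            exact mul_le_mul_of_nonneg_left (Real.log_le_sub_one_of_pos (div_pos hqa h)) (le_of_lt h)
        _ = q a - r a := by field_simp
  have := Finset.sum_le_sum (fun a (_ : a ∈ (univ : Finset γ)) => key a)
  rw [Finset.sum_sub_distrib, Finset.sum_sub_distrib] at this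
  linarith

lemma probOf_marginal_fst (p : Ω → ℝ) (X : Ω → α) (Y : Ω → β) (a : α) :
    ∑ b, probOf p (fun ω => (X ω, Y ω)) (a, b) = probOf p X a := by
  unfold probOf
  have h : ∀ b, (univ.filter (fun ω => (X ω, Y ω) = (a, b)))
      = (univ.filter (fun ω => X ω = a)).filter (fun ω => Y ω = b) := by
    intro b; ext ω; simp [Prod.ext_iff, and_comm]
  simp_rw [h]
  exact Finset.sum_fiberwise _ _ _

lemma probOf_marginal_snd (p : Ω → ℝ) (X : Ω → α) (Y : Ω → β) (b : β) :
    ∑ a, probOf p (fun ω => (X ω, Y ω)) (a, b) = probOf p Y b := by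
  unfold probOf
  have h : ∀ a, (univ.filter (fun ω => (X ω, Y ω) = (a, b)))
      = (univ.filter (fun ω => Y ω = b)).filter (fun ω => X ω = a) := by
    intro a; ext ω; simp [Prod.ext_iff, and_comm]
  simp_rw [h]
  exact Finset.sum_fiberwise _ _ _

lemma entH_pair_le {p : Ω → ℝ} (hp0 : ∀ ω, 0 ≤ p ω) (hp1 : ∑ ω, p ω = 1)
    (X : Ω → α) (Y : Ω → β) :
    entH p (fun ω => (X ω, Y ω)) ≤ entH p X + entH p Y := by
  set P := probOf p (fun ω => (X ω, Y ω)) with hP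
  set q : α × β → ℝ := fun z => probOf p X z.1 * probOf p Y z.2 with hq
  have hPfst : ∀ z : α × β, P z ≤ probOf p X z.1 := by
    intro z
    have := probOf_le_comp hp0 Prod.fst (fun ω => (X ω, Y ω)) z
    exact this
  have hPsnd : ∀ z : α × β, P z ≤ probOf p Y z.2 := by
    intro z
    have := probOf_le_comp hp0 Prod.snd (fun ω => (X ω, Y ω)) z
    exact this
  have hq1 : ∑ z : α × β, (probOf p X z.1 * probOf p Y z.2) = 1 := by
    rw [Fintype.sum_prod_type]
    simp_rw [← Finset.mul_sum, sum_probOf, hp1, mul_one]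
    rw [sum_probOf, hp1]
  have hg := gibbs P q (fun z => probOf_nonneg hp0 _ z)
    (fun z => mul_nonneg (probOf_nonneg hp0 _ _) (probOf_nonneg hp0 _ _))
    (fun z hz => mul_pos (lt_of_lt_of_le hz (hPfst z)) (lt_of_lt_of_le hz (hPsnd z)))
    (by rw [sum_probOf, hp1]; exact le_of_eq hq1)
  refine le_trans hg ?_
  have expand : - ∑ z, P z * Real.log (q z)
      = (- ∑ z : α × β, P z * Real.log (probOf p X z.1))
        + (- ∑ z : α × β, P z * Real.log (probOf p Y z.2)) := by
    rw [← neg_add, ← Finset.sum_add_distrib]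
    congr 1
    refine Finset.sum_congr rfl fun z _ => ?_
    rcases eq_or_lt_of_le (probOf_nonneg hp0 (fun ω => (X ω, Y ω)) z) with h | h
    · have h0 : P z = 0 := h.symm
      rw [h0]; ring
    · rw [hq, Real.log_mul (ne_of_gt (lt_of_lt_of_le h (hPfst z))) (ne_of_gt (lt_of_lt_of_le h (hPsnd z)))]
      ring
  rw [expand]
  have e1 : ∑ z : α × β, P z * Real.log (probOf p X z.1)
      = ∑ a, probOf p X a * Real.log (probOf p X a) := by
    rw [Fintype.sum_prod_type]
    refine Finset.sum_congr rfl fun a _ => ?_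
    change ∑ y : β, P (a, y) * Real.log (probOf p X a) = _
    rw [← Finset.sum_mul]
    have := probOf_marginal_fst p X Y a
    rw [hP, this]
  have e2 : ∑ z : α × β, P z * Real.log (probOf p Y z.2)
      = ∑ b, probOf p Y b * Real.log (probOf p Y b) := by
    rw [Fintype.sum_prod_type_right]
    refine Finset.sum_congr rfl fun b _ => ?_
    change ∑ x : α, P (x, b) * Real.log (probOf p Y b) = _
    rw [← Finset.sum_mul]
    have := probOf_marginal_snd p X Y b
    rw [hP, this]
  rw [e1, e2]
  exact le_refl _

end Helpers

/-- Let `W₁, …, W_K` be independent uniform messages, `S` common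
randomness independent of `(W, Q)`, and `A` a deterministic function of
`(Q, W_{[1:K]}, S)`. If `I(W_{\bar k} ; A, Q) = 0` (database-privacy) and
`H(W_k | A, Q) ≤ δ`, then `H(A | Q) ≤ H(S) + H(W_k) + δ`. -/
theorem stmt10 {Ω : Type*} [Fintype Ω]
    {αW αA αQ αS : Type*} [Fintype αW] [DecidableEq αW] [Fintype αA] [DecidableEq αA]
    [Fintype αQ] [DecidableEq αQ] [Fintype αS] [DecidableEq αS]
    (p : Ω → ℝ) (hp : IsPMF p)
    (K : ℕ) (W : Fin K → Ω → αW) (A : Ω → αA) (Q : Ω → αQ) (S : Ω → αS) (k : Fin K)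
    (δ : ℝ) (hδ : 0 ≤ δ)
    -- the messages are mutually independent and uniform:
    (hWindep : entH p (fun ω => fun i => W i ω) = ∑ i, entH p (W i))
    (hWunif : ∀ i, entH p (W i) = Real.log (Fintype.card αW))
    -- the common randomness is independent of the messages and queries:
    (hSindep : mutI p S (fun ω => ((fun i => W i ω), Q ω)) = 0)
    -- the answer is a deterministic function of (Q, W, S):
    (hdet : condH p A (fun ω => (Q ω, (fun i => W i ω), S ω)) = 0)
    -- database-privacy:
    (hdb : mutI p (fun ω => fun i : {i // i ≠ k} => W i.1 ω) (fun ω => (A ω, Q ω)) = 0)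
    -- correctness:
    (hcorr : condH p (W k) (fun ω => (A ω, Q ω)) ≤ δ) :
    condH p A Q ≤ entH p S + entH p (W k) + δ := by
  obtain ⟨hp0, hp1⟩ := hp
  simp only [mutI] at hSindep hdb
  simp only [condH] at hdet ⊢
  have t1 : entH p (fun ω => ((fun i : {i // i ≠ k} => W i.1 ω), (A ω, Q ω)))
      ≤ entH p (fun ω => ((fun i => W i ω), (A ω, Q ω))) :=
    entH_comp_le hp0
      (fun z : (Fin K → αW) × (αA × αQ) => ((fun i : {i // i ≠ k} => z.1 i.1), z.2))
      (fun ω => ((fun i => W i ω), (A ω, Q ω)))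
  have t2 : entH p (fun ω => ((fun i => W i ω), (A ω, Q ω)))
      = entH p (fun ω => (A ω, (Q ω, (fun i => W i ω)))) :=
    entH_comp_inj p
      (f := fun z : αA × (αQ × (Fin K → αW)) => (z.2.2, (z.1, z.2.1)))
      (fun z z' h => by
        obtain ⟨a, q, w⟩ := z; obtain ⟨a', q', w'⟩ := z'
        simp only [Prod.mk.injEq] at h ⊢
        exact ⟨h.2.1, h.2.2, h.1⟩)
      (fun ω => (A ω, (Q ω, (fun i => W i ω))))
  have t3 : entH p (fun ω => (A ω, (Q ω, (fun i => W i ω))))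
      ≤ entH p (fun ω => (A ω, (Q ω, (fun i => W i ω), S ω))) :=
    entH_comp_le hp0
      (fun z : αA × (αQ × (Fin K → αW) × αS) => (z.1, (z.2.1, z.2.2.1)))
      (fun ω => (A ω, (Q ω, (fun i => W i ω), S ω)))
  have t5 : entH p (fun ω => (Q ω, (fun i => W i ω), S ω))
      = entH p (fun ω => (S ω, ((fun i => W i ω), Q ω))) :=
    entH_comp_inj p
      (f := fun z : αS × ((Fin K → αW) × αQ) => (z.2.2, (z.2.1, z.1)))
      (fun z z' h => by
        obtain ⟨s, w, q⟩ := z; obtain ⟨s', w', q'⟩ := z'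
        simp only [Prod.mk.injEq] at h ⊢
        exact ⟨h.2.2, h.2.1, h.1⟩)
      (fun ω => (S ω, ((fun i => W i ω), Q ω)))
  have t7 : entH p (fun ω => ((fun i => W i ω), Q ω))
      ≤ entH p (fun ω => fun i => W i ω) + entH p Q :=
    entH_pair_le hp0 hp1 (fun ω => fun i => W i ω) Q
  have t8 : entH p (fun ω => fun i => W i ω)
      = entH p (fun ω => ((fun i : {i // i ≠ k} => W i.1 ω), W k ω)) :=
    (entH_comp_inj p
      (f := fun w : Fin K → αW => ((fun i : {i // i ≠ k} => w i.1), w k))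
      (fun w w' h => by
        have h1 := congrArg Prod.fst h
        have h2 := congrArg Prod.snd h
        simp only at h1 h2
        funext i
        by_cases hik : i = k
        · rw [hik]; exact h2
        · exact congrFun h1 ⟨i, hik⟩)
      (fun ω => fun i => W i ω)).symm
  have t9 : entH p (fun ω => ((fun i : {i // i ≠ k} => W i.1 ω), W k ω))
      ≤ entH p (fun ω => fun i : {i // i ≠ k} => W i.1 ω) + entH p (W k) :=
    entH_pair_le hp0 hp1 _ _
  linarith
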